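/- Let X and Y be n×n complex Hermitian matrices with X ≤ Y in the Löwner order, and let f : ℝ → ℝ be a continuous monotonically increasing function. Then Tr f(X) ≤ Tr f(Y), where f(X) and f(Y) are defined by applying f to the eigenvalues via the spectral (continuous functional) calculus. -/

import Mathlib

open Matrix
open scoped Kronecker ComplexOrder

noncomputable section

/-- Apply a real function to the spectrum of a Hermitian matrix via the spectral
(continuous functional) calculus; junk value `0` if the matrix is not Hermitian. -/
def matFun {n : Type*} [Fintype n] [DecidableEq n] (M : Matrix n n ℂ) (f : ℝ → ℝ) :
    Matrix n n ℂ :=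
  if hM : M.IsHermitian then
    (hM.eigenvectorUnitary : Matrix n n ℂ) *
      Matrix.diagonal (fun i => (f (hM.eigenvalues i) : ℂ)) *
        (star (hM.eigenvectorUnitary : Matrix n n ℂ))
  else 0

/-- Real (spectral) power of a matrix, with the convention `0 ^ β = 0` for `β ≠ 0`. -/
def matRpow {n : Type*} [Fintype n] [DecidableEq n] (M : Matrix n n ℂ) (β : ℝ) :
    Matrix n n ℂ :=
  matFun M (fun x => x ^ β)

/-- Trace norm (Schatten 1-norm): `‖M‖₁ = Tr √(Mᴴ M)`. -/
def traceNorm {n : Type*} [Fintype n] [DecidableEq n] (M : Matrix n n ℂ) : ℝ :=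
  (((Matrix.posSemidef_conjTranspose_mul_self M).1.eigenvectorUnitary.1 *
      diagonal (fun i => ((√((Matrix.posSemidef_conjTranspose_mul_self M).1.eigenvalues i) : ℝ) : ℂ)) *
      (star (Matrix.posSemidef_conjTranspose_mul_self M).1.eigenvectorUnitary :
        Matrix n n ℂ)).trace).re

/-- Operator norm of a matrix, acting on the Euclidean (ℓ²) space. -/
def opNorm {n : Type*} [Fintype n] [DecidableEq n] (M : Matrix n n ℂ) : ℝ :=
  ‖Matrix.toEuclideanCLM (𝕜 := ℂ) M‖

/-- Partial trace over the second tensor factor. -/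
def ptraceRight {ιA ιB : Type*} [Fintype ιB] (M : Matrix (ιA × ιB) (ιA × ιB) ℂ) :
    Matrix ιA ιA ℂ :=
  Matrix.of fun a a' => ∑ b : ιB, M (a, b) (a', b)

/-- Heisenberg time evolution `ρ(t) = e^{-iHt} ρ e^{iHt}`. -/
def timeEvol {n : Type*} [Fintype n] [DecidableEq n] (H ρ : Matrix n n ℂ) (t : ℝ) :
    Matrix n n ℂ :=
  NormedSpace.exp ((-(Complex.I * (t : ℂ))) • H) * ρ *
    NormedSpace.exp ((Complex.I * (t : ℂ)) • H)

/-- Von Neumann entropy `S₁(σ) = -Tr(σ log σ)` (with the convention `0 log 0 = 0`). -/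
def entVN {n : Type*} [Fintype n] [DecidableEq n] (σ : Matrix n n ℂ) : ℝ :=
  -((matFun σ (fun x => x * Real.log x)).trace.re)

/-- α-Renyi entropy `S_α(σ) = (1/(1-α)) log Tr σ^α`. -/
def renyiEnt {n : Type*} [Fintype n] [DecidableEq n] (α : ℝ) (σ : Matrix n n ℂ) : ℝ :=
  (1 - α)⁻¹ * Real.log ((matRpow σ α).trace.re)

end



section AuxForStmt2
open Matrix Module
open scoped ComplexOrder

noncomputable section

def coordSub (n : ℕ) (s : Finset (Fin n)) : Submodule ℂ (Fin n → ℂ) :=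
  ⨅ i ∈ (sᶜ : Finset (Fin n)), LinearMap.ker (LinearMap.proj (R := ℂ) (φ := fun _ : Fin n => ℂ) i)

lemma mem_coordSub {n : ℕ} {s : Finset (Fin n)} {w : Fin n → ℂ} :
    w ∈ coordSub n s ↔ ∀ i ∉ s, w i = 0 := by
  simp [coordSub, Submodule.mem_iInf]

lemma card_le_finrank_coordSub (n : ℕ) (s : Finset (Fin n)) :
    s.card ≤ finrank ℂ (coordSub n s) := by
  have hli : LinearIndependent ℂ (fun i : s => (Pi.single (i : Fin n) 1 : Fin n → ℂ)) := by
    have h2 := (Pi.basisFun ℂ (Fin n)).linearIndependent.comp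
      (Subtype.val : s → Fin n) Subtype.val_injective
    have he : (⇑(Pi.basisFun ℂ (Fin n)) ∘ (Subtype.val : s → Fin n))
        = fun i : s => (Pi.single (i : Fin n) 1 : Fin n → ℂ) :=
      funext fun i => Pi.basisFun_apply ℂ (Fin n) i
    rwa [he] at h2
  have hle : Submodule.span ℂ (Set.range fun i : s => (Pi.single (i : Fin n) 1 : Fin n → ℂ))
      ≤ coordSub n s := by
    rw [Submodule.span_le]
    rintro _ ⟨i, rfl⟩
    rw [SetLike.mem_coe, mem_coordSub]
    intro j hj
    exact Pi.single_eq_of_ne (fun h => hj (by rw [h]; exact i.2)) 1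
  calc s.card = finrank ℂ (Submodule.span ℂ (Set.range fun i : s =>
        (Pi.single (i : Fin n) 1 : Fin n → ℂ))) := by
        rw [finrank_span_eq_card hli, Fintype.card_coe]
    _ ≤ finrank ℂ (coordSub n s) := Submodule.finrank_mono hle

def unitEquiv {n : ℕ} (U : Matrix.unitaryGroup (Fin n) ℂ) : (Fin n → ℂ) ≃ₗ[ℂ] (Fin n → ℂ) :=
  LinearEquiv.ofLinear (Matrix.mulVecLin (U : Matrix (Fin n) (Fin n) ℂ))
    (Matrix.mulVecLin (star U : Matrix (Fin n) (Fin n) ℂ))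
    (by rw [← Matrix.mulVecLin_mul, Unitary.mul_star_self_of_mem U.2, Matrix.mulVecLin_one])
    (by rw [← Matrix.mulVecLin_mul, Unitary.star_mul_self_of_mem U.2, Matrix.mulVecLin_one])

lemma quad_eig (n : ℕ) (X : Matrix (Fin n) (Fin n) ℂ) (hX : X.IsHermitian) (w : Fin n → ℂ) :
    star ((hX.eigenvectorUnitary : Matrix (Fin n) (Fin n) ℂ) *ᵥ w) ⬝ᵥ
      (X *ᵥ ((hX.eigenvectorUnitary : Matrix (Fin n) (Fin n) ℂ) *ᵥ w)) =
    ∑ i, (RCLike.ofReal (hX.eigenvalues i) : ℂ) * ((starRingEnd ℂ) (w i) * w i) := by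
  set U : Matrix (Fin n) (Fin n) ℂ := (hX.eigenvectorUnitary : Matrix (Fin n) (Fin n) ℂ) with hU
  have hUU : star U * U = 1 := Unitary.coe_star_mul_self hX.eigenvectorUnitary
  have hUU' : Uᴴ * U = 1 := by rw [← Matrix.star_eq_conjTranspose]; exact hUU
  have h1 : X *ᵥ (U *ᵥ w) = U *ᵥ ((diagonal (RCLike.ofReal ∘ hX.eigenvalues) : Matrix (Fin n) (Fin n) ℂ) *ᵥ w) := by
    conv_lhs => rw [hX.spectral_theorem, Unitary.conjStarAlgAut_apply]
    simp only [← hU, mulVec_mulVec, Matrix.mul_assoc, hUU, mul_one]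
  rw [h1, star_mulVec, dotProduct_mulVec, vecMul_vecMul, hUU', vecMul_one]
  simp only [dotProduct, mulVec_diagonal, Pi.star_apply, RCLike.star_def, Function.comp]
  refine Finset.sum_congr rfl fun i _ => ?_
  ring

lemma quad_norm (n : ℕ) (U : Matrix.unitaryGroup (Fin n) ℂ) (w : Fin n → ℂ) :
    star ((U : Matrix (Fin n) (Fin n) ℂ) *ᵥ w) ⬝ᵥ ((U : Matrix (Fin n) (Fin n) ℂ) *ᵥ w) =
    ∑ i, (starRingEnd ℂ) (w i) * w i := by
  have hUU' : (U : Matrix (Fin n) (Fin n) ℂ)ᴴ * U = 1 := by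
    rw [← Matrix.star_eq_conjTranspose]; exact Unitary.coe_star_mul_self U
  rw [star_mulVec, dotProduct_mulVec, vecMul_vecMul, hUU', vecMul_one]
  simp only [dotProduct, Pi.star_apply, RCLike.star_def]

lemma conj_mul_self_re (z : ℂ) : ((starRingEnd ℂ) z * z).re = Complex.normSq z := by
  rw [mul_comm, Complex.mul_conj]; simp

lemma key_count (n : ℕ) (X Y : Matrix (Fin n) (Fin n) ℂ)
    (hX : X.IsHermitian) (hY : Y.IsHermitian) (hXY : (Y - X).PosSemidef)
    (c d : ℝ) (hcd : d < c) :
    (Finset.univ.filter (fun i => c ≤ hX.eigenvalues i)).card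
      + (Finset.univ.filter (fun j => hY.eigenvalues j ≤ d)).card ≤ n := by
  by_contra hcon
  push_neg at hcon
  set sX : Finset (Fin n) := Finset.univ.filter (fun i => c ≤ hX.eigenvalues i) with hsX
  set sY : Finset (Fin n) := Finset.univ.filter (fun j => hY.eigenvalues j ≤ d) with hsY
  set UX := hX.eigenvectorUnitary
  set UY := hY.eigenvectorUnitary
  set P : Submodule ℂ (Fin n → ℂ) := (coordSub n sX).map (unitEquiv UX).toLinearMap with hP
  set Q : Submodule ℂ (Fin n → ℂ) := (coordSub n sY).map (unitEquiv UY).toLinearMap with hQ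
  have hrP : finrank ℂ P = finrank ℂ (coordSub n sX) := LinearEquiv.finrank_map_eq _ _
  have hrQ : finrank ℂ Q = finrank ℂ (coordSub n sY) := LinearEquiv.finrank_map_eq _ _
  have htop : finrank ℂ (Fin n → ℂ) = n := by simp
  have hsup : finrank ℂ (P ⊔ Q : Submodule ℂ (Fin n → ℂ)) ≤ n := by
    exact le_trans (Submodule.finrank_le _) (le_of_eq htop)
  have heq := Submodule.finrank_sup_add_finrank_inf_eq P Q
  have hinf : 0 < finrank ℂ (P ⊓ Q : Submodule ℂ (Fin n → ℂ)) := by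
    have h1 := card_le_finrank_coordSub n sX
    have h2 := card_le_finrank_coordSub n sY
    omega
  have : Nontrivial (P ⊓ Q : Submodule ℂ (Fin n → ℂ)) := Module.nontrivial_of_finrank_pos hinf
  obtain ⟨v0, hv0⟩ := exists_ne (0 : (P ⊓ Q : Submodule ℂ (Fin n → ℂ)))
  set v : Fin n → ℂ := (v0 : Fin n → ℂ) with hv
  have hvne : v ≠ 0 := fun h => hv0 (Subtype.ext h)
  have hvP : v ∈ P := v0.2.1
  have hvQ : v ∈ Q := v0.2.2
  obtain ⟨w, hwmem, hwv⟩ := hvP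
  obtain ⟨u, humem, huv⟩ := hvQ
  have hwv' : (UX : Matrix (Fin n) (Fin n) ℂ) *ᵥ w = v := hwv
  have huv' : (UY : Matrix (Fin n) (Fin n) ℂ) *ᵥ u = v := huv
  -- quadratic forms
  have hXv : (star v ⬝ᵥ (X *ᵥ v)).re = ∑ i, hX.eigenvalues i * Complex.normSq (w i) := by
    rw [← hwv', quad_eig n X hX w, Complex.re_sum]
    refine Finset.sum_congr rfl fun i _ => ?_
    rw [show (RCLike.ofReal (hX.eigenvalues i) : ℂ) = Complex.ofReal (hX.eigenvalues i) from rfl,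
      Complex.re_ofReal_mul, conj_mul_self_re]
  have hYv : (star v ⬝ᵥ (Y *ᵥ v)).re = ∑ i, hY.eigenvalues i * Complex.normSq (u i) := by
    rw [← huv', quad_eig n Y hY u, Complex.re_sum]
    refine Finset.sum_congr rfl fun i _ => ?_
    rw [show (RCLike.ofReal (hY.eigenvalues i) : ℂ) = Complex.ofReal (hY.eigenvalues i) from rfl,
      Complex.re_ofReal_mul, conj_mul_self_re]
  have hnw : (star v ⬝ᵥ v).re = ∑ i, Complex.normSq (w i) := by
    rw [← hwv', quad_norm n UX w, Complex.re_sum]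
    exact Finset.sum_congr rfl fun i _ => conj_mul_self_re _
  have hnu : (star v ⬝ᵥ v).re = ∑ i, Complex.normSq (u i) := by
    rw [← huv', quad_norm n UY u, Complex.re_sum]
    exact Finset.sum_congr rfl fun i _ => conj_mul_self_re _
  have hApos : 0 < (star v ⬝ᵥ v).re := by
    obtain ⟨i, hi⟩ := Function.ne_iff.mp hvne
    have : (star v ⬝ᵥ v) = ∑ j, (starRingEnd ℂ) (v j) * v j := by
      simp only [dotProduct, Pi.star_apply, RCLike.star_def]
    rw [this, Complex.re_sum]
    have he : ∀ j, ((starRingEnd ℂ) (v j) * v j).re = Complex.normSq (v j) :=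
      fun j => conj_mul_self_re _
    rw [Finset.sum_congr rfl fun j _ => he j]
    exact Finset.sum_pos' (fun j _ => Complex.normSq_nonneg _)
      ⟨i, Finset.mem_univ i, Complex.normSq_pos.mpr hi⟩
  -- bounds
  have hlower : c * (star v ⬝ᵥ v).re ≤ (star v ⬝ᵥ (X *ᵥ v)).re := by
    rw [hXv, hnw, Finset.mul_sum]
    refine Finset.sum_le_sum fun i _ => ?_
    by_cases hmem : i ∈ sX
    · have : c ≤ hX.eigenvalues i := by
        rw [hsX] at hmem; exact (Finset.mem_filter.mp hmem).2
      exact mul_le_mul_of_nonneg_right this (Complex.normSq_nonneg _)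
    · have : w i = 0 := (mem_coordSub.mp hwmem) i hmem
      simp [this]
  have hupper : (star v ⬝ᵥ (Y *ᵥ v)).re ≤ d * (star v ⬝ᵥ v).re := by
    rw [hYv, hnu, Finset.mul_sum]
    refine Finset.sum_le_sum fun j _ => ?_
    by_cases hmem : j ∈ sY
    · have : hY.eigenvalues j ≤ d := by
        rw [hsY] at hmem; exact (Finset.mem_filter.mp hmem).2
      exact mul_le_mul_of_nonneg_right this (Complex.normSq_nonneg _)
    · have : u j = 0 := (mem_coordSub.mp humem) j hmem
      simp [this]
  -- PSD
  have hmid : (star v ⬝ᵥ (X *ᵥ v)).re ≤ (star v ⬝ᵥ (Y *ᵥ v)).re := by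
    have h0 := hXY.dotProduct_mulVec_nonneg v
    rw [Matrix.sub_mulVec, dotProduct_sub] at h0
    have := (Complex.le_def.mp h0).1
    simp only [Complex.zero_re, Complex.sub_re] at this
    linarith
  nlinarith


lemma weyl_sorted (n : ℕ) (X Y : Matrix (Fin n) (Fin n) ℂ)
    (hX : X.IsHermitian) (hY : Y.IsHermitian) (hXY : (Y - X).PosSemidef) (k : Fin n) :
    hX.eigenvalues (Tuple.sort hX.eigenvalues k) ≤ hY.eigenvalues (Tuple.sort hY.eigenvalues k) := by
  by_contra hlt
  push_neg at hlt
  set c := hX.eigenvalues (Tuple.sort hX.eigenvalues k) with hc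
  set d := hY.eigenvalues (Tuple.sort hY.eigenvalues k) with hd
  have hmonoX := Tuple.monotone_sort hX.eigenvalues
  have hmonoY := Tuple.monotone_sort hY.eigenvalues
  set T : Finset (Fin n) := Finset.univ.filter (fun i => k ≤ i) with hT
  set T' : Finset (Fin n) := Finset.univ.filter (fun i => i ≤ k) with hT'
  have hcards : T.card + T'.card = n + 1 := by
    have hunion : T ∪ T' = Finset.univ := by
      ext i; simp [hT, hT', le_total k i |>.symm, or_comm]
      exact le_total k i
    have hinter : T ∩ T' = {k} := by
      ext i
      simp only [hT, hT', Finset.mem_inter, Finset.mem_filter, Finset.mem_univ, true_and,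
        Finset.mem_singleton]
      constructor
      · rintro ⟨h1, h2⟩; exact le_antisymm h2 h1
      · rintro rfl; exact ⟨le_refl _, le_refl _⟩
    have := Finset.card_union_add_card_inter T T'
    rw [hunion, hinter] at this
    simpa [Finset.card_univ] using this.symm
  have hTle : T.card ≤ (Finset.univ.filter (fun i => c ≤ hX.eigenvalues i)).card := by
    apply Finset.card_le_card_of_injOn (Tuple.sort hX.eigenvalues)
    · intro i hi
      simp only [hT, Finset.mem_coe, Finset.mem_filter, Finset.mem_univ, true_and] at hi ⊢
      exact hmonoX hi
    · exact fun a _ b _ h => (Tuple.sort hX.eigenvalues).injective h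
  have hT'le : T'.card ≤ (Finset.univ.filter (fun j => hY.eigenvalues j ≤ d)).card := by
    apply Finset.card_le_card_of_injOn (Tuple.sort hY.eigenvalues)
    · intro i hi
      simp only [hT', Finset.mem_coe, Finset.mem_filter, Finset.mem_univ, true_and] at hi ⊢
      exact hmonoY hi
    · exact fun a _ b _ h => (Tuple.sort hY.eigenvalues).injective h
  have := key_count n X Y hX hY hXY c d hlt
  omega

lemma trace_matFun (n : ℕ) (X : Matrix (Fin n) (Fin n) ℂ) (hX : X.IsHermitian) (f : ℝ → ℝ) :
    ((matFun X f).trace).re = ∑ i, f (hX.eigenvalues i) := by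
  rw [matFun, dif_pos hX]
  rw [Matrix.trace_mul_cycle]
  rw [Unitary.coe_star_mul_self hX.eigenvectorUnitary, Matrix.one_mul,
    Matrix.trace_diagonal, Complex.re_sum]
  simp

end
end AuxForStmt2

/-- If `X ≤ Y` are Hermitian and `f : ℝ → ℝ` is continuous and monotone
increasing, then `Tr f(X) ≤ Tr f(Y)`. -/
theorem stmt_2 (n : ℕ) (X Y : Matrix (Fin n) (Fin n) ℂ)
    (hX : X.IsHermitian) (hY : Y.IsHermitian) (hXY : (Y - X).PosSemidef)
    (f : ℝ → ℝ) (hf_cont : Continuous f) (hf_mono : Monotone f) :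
    ((matFun X f).trace).re ≤ ((matFun Y f).trace).re :=  by
  rw [trace_matFun n X hX f, trace_matFun n Y hY f]
  rw [← Equiv.sum_comp (Tuple.sort hX.eigenvalues) (fun i => f (hX.eigenvalues i)),
    ← Equiv.sum_comp (Tuple.sort hY.eigenvalues) (fun i => f (hY.eigenvalues i))]
  exact Finset.sum_le_sum fun k _ => hf_mono (weyl_sorted n X Y hX hY hXY k)
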